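/- There exist constants C > 0 and k ∈ ℕ such that for every integer T ≥ 2 and every real V > 0 there exists a randomized bidding policy π over T rounds (which may depend on V) such that for every sequence (v_t, m_t)_{t=1}^T ⊂ [0,1]^2 with v_t = 1 for all t and Σ_{t=2}^T |m_t − m_{t−1}| ≤ V, the expected dynamic regret of π on this sequence is at most C · max{√(T·V), 1} · (1 + log T)^k; this is achieved by restarting a single-hint bidding algorithm every Δ_T = Θ(√(T/V)) rounds. -/

import Mathlib

/-- First-price auction reward: `r(b; v, m) = (v - b) · 1[b ≥ m]`. -/
noncomputable def fpaReward (b v m : ℝ) : ℝ := if m ≤ b then v - b else 0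

/-- A randomized bidding policy over `T` rounds: a probability space together with,
for each round `t`, a measurable map from (history of `(vₛ, mₛ)` for `s < t`, current
value `vₜ`, randomness `ω`) to a bid in `[0,1]`. Rounds are indexed `0, …, T-1`. -/
structure BidPolicy (T : ℕ) where
  Ω : Type
  [instMS : MeasurableSpace Ω]
  μ : MeasureTheory.Measure Ω
  isProb : MeasureTheory.IsProbabilityMeasure μ
  bid : (t : ℕ) → (Fin t → ℝ × ℝ) → ℝ → Ω → ℝ
  bid_mem : ∀ t h v ω, bid t h v ω ∈ Set.Icc (0:ℝ) 1
  bid_measurable : ∀ t, Measurable fun p : (Fin t → ℝ × ℝ) × ℝ × Ω => bid t p.1 p.2.1 p.2.2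

attribute [instance] BidPolicy.instMS

/-- The bid of the policy at round `t` on the sequence `(v, m)`, given randomness `ω`. -/
noncomputable def BidPolicy.bids {T : ℕ} (π : BidPolicy T) (v m : ℕ → ℝ) (t : ℕ)
    (ω : π.Ω) : ℝ :=
  π.bid t (fun s : Fin t => (v s, m s)) (v t) ω

/-- Expected dynamic regret of a policy on the sequence `(v, m)` over `T` rounds. -/
noncomputable def BidPolicy.expRegret {T : ℕ} (π : BidPolicy T) (v m : ℕ → ℝ) : ℝ :=
  ∫ ω, (∑ t ∈ Finset.range T,
    (max (v t - m t) 0 - fpaReward (π.bids v m t ω) (v t) (m t))) ∂π.μ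

/-- Temporal variation `Σ_{t=2}^T |m_t - m_{t-1}|` (rounds indexed `0, …, T-1`). -/
noncomputable def totalVariation (m : ℕ → ℝ) (T : ℕ) : ℝ :=
  ∑ t ∈ Finset.range (T - 1), |m (t + 1) - m t|

/-- Number of switches `Σ_{t=2}^T 1[m_t ≠ m_{t-1}]` (rounds indexed `0, …, T-1`). -/
noncomputable def numSwitches (m : ℕ → ℝ) (T : ℕ) : ℝ :=
  ∑ t ∈ Finset.range (T - 1), if m (t + 1) ≠ m t then 1 else 0

/-- Per-round regret bound for the bid `max 0 (min (a + ε) 1)` against `m_t = b`,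
when the previous highest bid was `a`. -/
lemma key_round (ε a b : ℝ) (hε : 0 < ε) (ha : a ∈ Set.Icc (0:ℝ) 1)
    (hb : b ∈ Set.Icc (0:ℝ) 1) :
    max (1 - b) 0 - fpaReward (max 0 (min (a + ε) 1)) 1 b
      ≤ ε + |b - a| + |b - a| / ε := by
  obtain ⟨ha0, ha1⟩ := ha
  obtain ⟨hb0, hb1⟩ := hb
  have hc : max 0 (min (a + ε) 1) = min (a + ε) 1 :=
    max_eq_right (le_min (by linarith) (by linarith))
  rw [hc]
  have habs : 0 ≤ |b - a| := abs_nonneg _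
  have hdiv : 0 ≤ |b - a| / ε := div_nonneg habs hε.le
  have hmax : max (1 - b) 0 = 1 - b := max_eq_left (by linarith)
  rw [hmax]
  unfold fpaReward
  split_ifs with h
  · -- winning round
    have h1 : min (a + ε) 1 ≤ a + ε := min_le_left _ _
    have h3 : a - b ≤ |b - a| := by
      rw [abs_sub_comm]; exact le_abs_self _
    linarith
  · -- losing round
    push_neg at h
    have hlt : min (a + ε) 1 < 1 := lt_of_lt_of_le h hb1
    have hae : a + ε < 1 := by
      by_contra hcon
      push_neg at hcon
      rw [min_eq_right hcon] at hlt
      exact lt_irrefl _ hlt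
    have heq : min (a + ε) 1 = a + ε := min_eq_left hae.le
    rw [heq] at h
    have h4 : ε ≤ |b - a| := by
      have : ε ≤ b - a := by linarith
      exact this.trans (le_abs_self _)
    have h5 : 1 ≤ |b - a| / ε := (one_le_div hε).mpr h4
    linarith

/-- The deterministic policy that bids 1 in round 0 and `min(m_{t-1} + ε, 1)`
(clamped to `[0,1]`) in round `t ≥ 1`. -/
noncomputable def restartPolicy (ε : ℝ) (T : ℕ) : BidPolicy T where
  Ω := Unit
  instMS := inferInstance
  μ := MeasureTheory.Measure.dirac ()
  isProb := MeasureTheory.Measure.dirac.isProbabilityMeasure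
  bid := fun t => match t with
    | 0 => fun _ _ _ => 1
    | s + 1 => fun h _ _ => max 0 (min ((h (Fin.last s)).2 + ε) 1)
  bid_mem := by
    intro t h v ω
    match t with
    | 0 => exact ⟨zero_le_one, le_refl 1⟩
    | s + 1 => exact ⟨le_max_left _ _, max_le zero_le_one (min_le_right _ _)⟩
  bid_measurable := by
    intro t
    match t with
    | 0 => exact measurable_const
    | s + 1 =>
      apply Measurable.max measurable_const
      apply Measurable.min _ measurable_const
      exact (measurable_snd.comp
        ((measurable_pi_apply (Fin.last s)).comp measurable_fst)).add_const ε

/-- Restarted single-hint-algorithm upper bound: for known `V > 0` there is a policy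
(restarting a single-hint bidding algorithm every `Θ(√(T/V))` rounds) whose expected
dynamic regret on every sequence with `v_t ≡ 1`, `m_t ∈ [0,1]` and temporal variation
at most `V` is `O(max {√(T·V), 1})` up to polylogarithmic factors in `T`. -/
theorem restart_single_hint_upper_bound :
    ∃ C : ℝ, 0 < C ∧ ∃ k : ℕ, ∀ T : ℕ, 2 ≤ T → ∀ V : ℝ, 0 < V →
      ∃ π : BidPolicy T,
        ∀ v m : ℕ → ℝ,
          (∀ t < T, v t = 1) → (∀ t < T, m t ∈ Set.Icc (0:ℝ) 1) →
          totalVariation m T ≤ V →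
          π.expRegret v m ≤
            C * max (Real.sqrt ((T : ℝ) * V)) 1 * (1 + Real.log T) ^ k := by
  refine ⟨4, by norm_num, 0, ?_⟩
  intro T hT V hV
  have hT0 : (0:ℝ) < T := by positivity
  set V' : ℝ := min V (T : ℝ) with hV'def
  have hV'0 : 0 < V' := lt_min hV hT0
  have hV'T : V' ≤ (T : ℝ) := min_le_right _ _
  have hV'V : V' ≤ V := min_le_left _ _
  set ε : ℝ := Real.sqrt (V' / T) with hεdef
  have hε0 : 0 < ε := Real.sqrt_pos.mpr (div_pos hV'0 hT0)
  refine ⟨restartPolicy ε T, ?_⟩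
  intro v m hv hm hTVle
  -- abbreviations
  set S : ℝ := Real.sqrt ((T : ℝ) * V') with hSdef
  have hS2 : S ^ 2 = (T : ℝ) * V' := Real.sq_sqrt (by positivity)
  have hS0 : 0 < S := Real.sqrt_pos.mpr (by positivity)
  have hεS : ε = S / T := by
    rw [hεdef, show V' / (T:ℝ) = ((T:ℝ) * V') / (T:ℝ) ^ 2 by field_simp,
      Real.sqrt_div (by positivity), Real.sqrt_sq hT0.le]
  have hTε : (T : ℝ) * ε = S := by rw [hεS]; field_simp
  have hVε : V' / ε = S := by
    rw [hεS, div_div_eq_mul_div, mul_comm, ← hS2, sq, mul_div_assoc,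
      div_self hS0.ne', mul_one]
  have hV'S : V' ≤ S := by
    calc V' = Real.sqrt (V' ^ 2) := (Real.sqrt_sq hV'0.le).symm
      _ ≤ S := Real.sqrt_le_sqrt (by nlinarith)
  set M : ℝ := max (Real.sqrt ((T : ℝ) * V)) 1 with hMdef
  have hSM : S ≤ M := le_max_of_le_left (Real.sqrt_le_sqrt (by nlinarith))
  have h1M : (1:ℝ) ≤ M := le_max_right _ _
  -- the regret as a finite sum
  set g : ℕ → ℝ := fun t =>
    max (v t - m t) 0 - fpaReward ((restartPolicy ε T).bids v m t ()) (v t) (m t)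
    with hgdef
  have hreg : (restartPolicy ε T).expRegret v m = ∑ t ∈ Finset.range T, g t := by
    unfold BidPolicy.expRegret
    exact MeasureTheory.integral_dirac _ ()
  -- bound the total variation by V'
  have hTVnonneg : 0 ≤ totalVariation m T := Finset.sum_nonneg fun _ _ => abs_nonneg _
  have hTVle' : totalVariation m T ≤ V' := by
    refine le_min hTVle ?_
    have h1 : totalVariation m T ≤ (Finset.range (T-1)).card • (1:ℝ) := by
      apply Finset.sum_le_card_nsmul
      intro t ht
      rw [Finset.mem_range] at ht
      obtain ⟨h1, h2⟩ := hm t (by omega)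
      obtain ⟨h3, h4⟩ := hm (t+1) (by omega)
      exact abs_le.mpr ⟨by linarith, by linarith⟩
    rw [Finset.card_range, nsmul_eq_mul, mul_one] at h1
    calc totalVariation m T ≤ ((T - 1 : ℕ) : ℝ) := h1
      _ ≤ (T : ℝ) := by exact_mod_cast Nat.cast_le.mpr (Nat.sub_le T 1)
  -- bound the sum
  have hsum : ∑ t ∈ Finset.range T, g t ≤
      1 + ((T - 1 : ℕ) : ℝ) * ε + totalVariation m T + totalVariation m T / ε := by
    have hsplit : ∑ t ∈ Finset.range T, g t
        = (∑ i ∈ Finset.range (T - 1), g (i + 1)) + g 0 := by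
      conv_lhs => rw [show T = (T - 1) + 1 by omega]
      exact Finset.sum_range_succ' g (T - 1)
    rw [hsplit]
    have hg0 : g 0 ≤ 1 := by
      have hb0 : (restartPolicy ε T).bids v m 0 () = 1 := rfl
      have hf : fpaReward 1 1 (m 0) = 0 := by
        unfold fpaReward; split_ifs <;> norm_num
      rw [hgdef]
      simp only [hb0, hv 0 (by omega), hf]
      obtain ⟨h1, h2⟩ := hm 0 (by omega)
      have : max (1 - m 0) 0 ≤ 1 := max_le (by linarith) zero_le_one
      linarith
    have hterm : ∀ i ∈ Finset.range (T - 1),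
        g (i + 1) ≤ ε + |m (i + 1) - m i| + |m (i + 1) - m i| / ε := by
      intro i hi
      rw [Finset.mem_range] at hi
      have hbi : (restartPolicy ε T).bids v m (i + 1) () = max 0 (min (m i + ε) 1) := rfl
      rw [hgdef]
      simp only [hbi, hv (i + 1) (by omega)]
      exact key_round ε (m i) (m (i + 1)) hε0 (hm i (by omega)) (hm (i + 1) (by omega))
    have hsum2 : ∑ i ∈ Finset.range (T - 1), g (i + 1) ≤
        ∑ i ∈ Finset.range (T - 1), (ε + |m (i + 1) - m i| + |m (i + 1) - m i| / ε) :=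
      Finset.sum_le_sum hterm
    have hsum3 : ∑ i ∈ Finset.range (T - 1),
        (ε + |m (i + 1) - m i| + |m (i + 1) - m i| / ε)
        = ((T - 1 : ℕ) : ℝ) * ε + totalVariation m T + totalVariation m T / ε := by
      rw [Finset.sum_add_distrib, Finset.sum_add_distrib, Finset.sum_const,
        Finset.card_range, nsmul_eq_mul, ← Finset.sum_div]
      rfl
    rw [hsum3] at hsum2
    have := add_le_add hsum2 hg0
    linarith [this]
  -- put everything together
  have hfinal : ∑ t ∈ Finset.range T, g t ≤ 1 + S + S + S := by
    have hc1 : ((T - 1 : ℕ) : ℝ) * ε ≤ (T : ℝ) * ε := by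
      have : ((T - 1 : ℕ) : ℝ) ≤ (T : ℝ) := by exact_mod_cast Nat.sub_le T 1
      exact mul_le_mul_of_nonneg_right this hε0.le
    have hc2 : totalVariation m T / ε ≤ V' / ε :=
      (div_le_div_iff_of_pos_right hε0).mpr hTVle'
    calc ∑ t ∈ Finset.range T, g t
        ≤ 1 + ((T - 1 : ℕ) : ℝ) * ε + totalVariation m T + totalVariation m T / ε := hsum
      _ ≤ 1 + (T : ℝ) * ε + V' + V' / ε := by linarith
      _ ≤ 1 + S + S + S := by rw [hTε, hVε]; linarith
  rw [hreg]
  simp only [pow_zero, mul_one]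
  linarith
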